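/- Let a₁, ..., aₙ ∈ ℤ \ {0} with gcd(a₁, ..., aₙ) = 1 and all |aᵢ| ≠ 1. Let r achieve the minimum of {|r'| : r' ≡ aᵢ (mod aⱼ), 0 < |r'| < |aⱼ|} over all pairs (i, j). Then |r| < |aᵢ| for every i. -/

import Mathlib

theorem stmt_12 (n : ℕ) (a : Fin n → ℤ) (ha : ∀ i, a i ≠ 0)
    (hgcd : Finset.univ.gcd a = 1) (habs : ∀ i, |a i| ≠ 1) (r : ℤ)
    (hmem : ∃ i j : Fin n, a j ∣ (a i - r) ∧ 0 < |r| ∧ |r| < |a j|)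
    (hmin : ∀ (r' : ℤ) (i j : Fin n),
      a j ∣ (a i - r') → 0 < |r'| → |r'| < |a j| → |r| ≤ |r'|) :
    ∀ i, |r| < |a i| := by
  intro i
  by_contra h
  push_neg at h
  -- there exists k with ¬ a i ∣ a k, else a i ∣ gcd = 1
  have hk : ∃ k : Fin n, ¬ a i ∣ a k := by
    by_contra hall
    push_neg at hall
    have : a i ∣ Finset.univ.gcd a := Finset.dvd_gcd (fun k _ => hall k)
    rw [hgcd] at this
    rcases Int.isUnit_iff.mp (isUnit_of_dvd_one this) with h1 | h1 <;> exact habs i (by rw [h1]; norm_num)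
  obtain ⟨k, hk⟩ := hk
  set s := a k % a i with hs
  have hs0 : 0 < s := lt_of_le_of_ne (Int.emod_nonneg _ (ha i))
    (fun h' => hk (Int.dvd_of_emod_eq_zero h'.symm))
  have hslt : s < |a i| := Int.emod_lt_abs _ (ha i)
  have hdvd : a i ∣ a k - s := Int.dvd_self_sub_of_emod_eq rfl
  have := hmin s k i hdvd (by rwa [abs_of_pos hs0]) (by rwa [abs_of_pos hs0])
  rw [abs_of_pos hs0] at this
  exact absurd (lt_of_le_of_lt this hslt) (not_lt.mpr h)
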